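/- For every integer n ≥ 3 and every real x ∈ [-1,1], one has P_n(x)^2 + x^2 ≤ 1. -/

import Mathlib

open Finset Polynomial Real

noncomputable section

/-- Binomial coefficient `C(a, b)` for integer lower index, zero when `b < 0` or `b > a`. -/
def chooseZ (a : ℕ) (b : ℤ) : ℤ := if 0 ≤ b then (a.choose b.toNat : ℤ) else 0

/-- `f n k m p = ∑_{i=0}^{n} (-1)^i C(n,i) C(np+m-ip, n+k)`. -/
def f (n : ℕ) (k : ℤ) (m p : ℕ) : ℤ :=
  ∑ i ∈ Finset.range (n + 1),
    (-1) ^ i * (n.choose i : ℤ) * chooseZ (n * p + m - i * p) ((n : ℤ) + k)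

/-- The coefficients `c(n,k,m,p)`. -/
def c (n : ℕ) (k : ℤ) (m p : ℕ) : ℤ :=
  if 0 ≤ k ∧ k ≤ (n : ℤ) ∧ (n : ℤ) % 2 = k % 2 ∧ 2 * (m : ℤ) ≤ (n : ℤ) + k then
    (-1) ^ ((((n : ℤ) - k) / 2).toNat) *
      f ((((n : ℤ) + k - 2 * m) / 2).toNat) (((n : ℤ) - k) / 2) m p
  else 0

/-- The polynomial `P_{n,m,p}(x) = ∑_{k=0}^n c(n,k,m,p) x^k`, as a real polynomial. -/
def P (n m p : ℕ) : Polynomial ℝ :=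
  ∑ k ∈ Finset.range (n + 1), Polynomial.C ((c n (k : ℤ) m p : ℝ)) * Polynomial.X ^ k
lemma chooseZ_pascal (a : ℕ) (b : ℤ) : chooseZ (a+1) b = chooseZ a b + chooseZ a (b-1) := by
  unfold chooseZ
  rcases lt_trichotomy b 0 with h | h | h
  · rw [if_neg (by omega), if_neg (by omega), if_neg (by omega)]; ring
  · subst h; norm_num
  · rw [if_pos (by omega), if_pos (by omega), if_pos (by omega)]
    have : b.toNat = (b-1).toNat + 1 := by omega
    rw [this, Nat.choose_succ_succ]
    push_cast; ring

lemma chooseZ_pascal₂ (a : ℕ) (b : ℤ) :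
    chooseZ (a+2) b = chooseZ a b + 2 * chooseZ a (b-1) + chooseZ a (b-2) := by
  rw [show a+2 = (a+1)+1 from rfl, chooseZ_pascal, chooseZ_pascal, chooseZ_pascal,
    show b-1-1 = b-2 by ring]
  ring

lemma f_rec (N : ℕ) (K : ℤ) : f (N+1) K 2 2 = 2 * f N K 2 2 + f N (K-1) 2 2 := by
  set L : ℤ := (N:ℤ) + 1 + K with hL
  set S1 : ℤ := ∑ i ∈ Finset.range (N+1),
      (-1)^i * (N.choose i : ℤ) * chooseZ (2*N+2-2*i) L with hS1
  set S2 : ℤ := ∑ i ∈ Finset.range (N+1),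
      (-1)^i * (N.choose (i+1) : ℤ) * chooseZ (2*N+2-2*i) L with hS2
  set T : ℤ := ∑ i ∈ Finset.range (N+1),
      (-1)^i * (N.choose i : ℤ) * chooseZ (2*N+4-2*i) L with hT
  have hS2T : S2 = chooseZ (2*N+4) L - T := by
    have h1 : ∑ i ∈ Finset.range (N+2),
        (-1:ℤ)^i * (N.choose i : ℤ) * chooseZ (2*N+4-2*i) L = T := by
      rw [Finset.sum_range_succ]
      simp [Nat.choose_succ_self]
      rfl
    rw [Finset.sum_range_succ'] at h1
    have h2 : ∑ i ∈ Finset.range (N+1),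
        (-1:ℤ)^(i+1) * (N.choose (i+1) : ℤ) * chooseZ (2*N+4-2*(i+1)) L = -S2 := by
      rw [hS2, ← Finset.sum_neg_distrib]
      apply Finset.sum_congr rfl
      intro i hi
      rw [show 2*N+4-2*(i+1) = 2*N+2-2*i by omega]
      ring
    rw [h2] at h1
    simp only [Nat.choose_zero_right, Nat.cast_one, pow_zero, one_mul, mul_zero,
      Nat.mul_zero, Nat.sub_zero] at h1
    linarith
  have hcast : ((N+1:ℕ):ℤ) + K = L := by push_cast [hL]; ring
  have hA : f (N+1) K 2 2 = T - S1 := by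
    unfold f
    rw [Finset.sum_range_succ']
    have h2 : ∑ i ∈ Finset.range (N+1),
        (-1:ℤ)^(i+1) * (((N+1).choose (i+1)) : ℤ) * chooseZ ((N+1)*2+2-(i+1)*2) (((N+1:ℕ):ℤ) + K)
        = -S1 + -S2 := by
      rw [hS1, hS2, ← Finset.sum_neg_distrib, ← Finset.sum_neg_distrib, ← Finset.sum_add_distrib]
      apply Finset.sum_congr rfl
      intro i hi
      rw [Finset.mem_range] at hi
      rw [hcast, show (N+1)*2+2-(i+1)*2 = 2*N+2-2*i by omega, Nat.choose_succ_succ]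
      push_cast; ring
    rw [h2, hcast, show (N+1)*2+2-0*2 = 2*N+4 by omega]
    simp only [Nat.choose_zero_right, Nat.cast_one, pow_zero, one_mul]
    linarith
  have hB : T - S1 = 2 * f N K 2 2 + f N (K-1) 2 2 := by
    unfold f
    rw [Finset.mul_sum, ← Finset.sum_add_distrib, hT, hS1, ← Finset.sum_sub_distrib]
    apply Finset.sum_congr rfl
    intro i hi
    rw [Finset.mem_range] at hi
    rw [show 2*N+4-2*i = (N*2+2-i*2)+2 by omega, show 2*N+2-2*i = N*2+2-i*2 by omega,
      chooseZ_pascal₂, show L-1 = (N:ℤ)+K by rw [hL]; ring,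
      show L-2 = (N:ℤ)+(K-1) by rw [hL]; ring]
    ring
  rw [hA, hB]

lemma f_base (K : ℤ) : f 0 K 2 2 = chooseZ 2 K := by
  simp [f]

lemma f_zero_neg : ∀ (N : ℕ) (K : ℤ), K < 0 → f N K 2 2 = 0 := by
  intro N
  induction N with
  | zero => intro K hK; rw [f_base, chooseZ, if_neg (by omega)]
  | succ n ih =>
    intro K hK
    rw [f_rec, ih K hK, ih (K-1) (by omega)]
    ring

lemma f_zero_big : ∀ (N : ℕ) (K : ℤ), (N:ℤ) + 3 ≤ K → f N K 2 2 = 0 := by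
  intro N
  induction N with
  | zero =>
    intro K hK
    rw [f_base, chooseZ, if_pos (by omega)]
    rw [Nat.choose_eq_zero_of_lt (by omega)]
    simp
  | succ n ih =>
    intro K hK
    rw [f_rec, ih K (by push_cast at hK ⊢; omega), ih (K-1) (by push_cast at hK ⊢; omega)]
    ring

lemma c_zero_par (n : ℕ) (k : ℤ) (h : (n:ℤ) % 2 ≠ k % 2) : c n k 2 2 = 0 := by
  rw [c, if_neg (by tauto)]

lemma c_zero_gt (n : ℕ) (k : ℤ) (m p : ℕ) (h : (n:ℤ) < k) : c n k m p = 0 := by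
  rw [c, if_neg (by omega)]

lemma c_eval (k b : ℕ) (h : 2 ≤ k + b) :
    c (k+2*b) k 2 2 = (-1)^b * f (k+b-2) (b:ℤ) 2 2 := by
  rw [c, if_pos (by push_cast; omega)]
  have e1 : ((k+2*b:ℕ):ℤ) + (k:ℤ) - 2*((2:ℕ):ℤ) = 2 * ((k+b-2:ℕ):ℤ) := by omega
  have e2 : ((k+2*b:ℕ):ℤ) - (k:ℤ) = 2 * (b:ℤ) := by omega
  rw [e1, e2, Int.mul_ediv_cancel_left _ two_ne_zero, Int.mul_ediv_cancel_left _ two_ne_zero,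
    Int.toNat_natCast, Int.toNat_natCast]

lemma P_coeff (n m p j : ℕ) : (P n m p).coeff j = ((c n (j:ℤ) m p : ℤ) : ℝ) := by
  unfold P
  rw [Polynomial.finset_sum_coeff]
  simp only [Polynomial.coeff_C_mul, Polynomial.coeff_X_pow, mul_ite, mul_one, mul_zero]
  rw [Finset.sum_ite_eq (Finset.range (n+1)) j]
  by_cases hj : j ∈ Finset.range (n+1)
  · rw [if_pos hj]
  · rw [if_neg hj, c_zero_gt]
    · simp
    · rw [Finset.mem_range] at hj; push_cast; omega

lemma c_rec0 (m : ℕ) : c (m+5) 0 2 2 = - c (m+3) 0 2 2 := by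
  by_cases hpar : m % 2 = 1
  · -- m+5 even
    obtain ⟨b, hb⟩ : ∃ b, m+5 = 0 + 2*(b+3) := ⟨(m-1)/2, by omega⟩
    have hb' : m+3 = 0 + 2*(b+2) := by omega
    have h1 := c_eval 0 (b+3) (by omega)
    have h2 := c_eval 0 (b+2) (by omega)
    push_cast at h1 h2
    rw [hb, hb', h1, h2]
    have e1 : 0+(b+3)-2 = (0+(b+2)-2)+1 := by omega
    rw [e1, f_rec]
    have e2 : f (0+(b+2)-2) ((b:ℤ)+3) 2 2 = 0 := f_zero_big _ _ (by push_cast; omega)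
    rw [e2, show ((b:ℤ)+3)-1 = (b:ℤ)+2 by ring, pow_succ]
    ring
  · rw [c_zero_par _ _ (by omega), c_zero_par _ _ (by omega)]
    ring

lemma c_recS (m j : ℕ) :
    c (m+5) ((j:ℤ)+1) 2 2 = 2 * c (m+4) (j:ℤ) 2 2 - c (m+3) ((j:ℤ)+1) 2 2 := by
  by_cases hpar : m % 2 = j % 2
  · by_cases hj : j ≤ m+4
    · obtain ⟨b, hb⟩ : ∃ b, m+4 = j + 2*b := ⟨(m+4-j)/2, by omega⟩
      have hkb : 2 ≤ j + b := by omega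
      have h5 : m+5 = (j+1) + 2*b := by omega
      have e0 : ((j+1:ℕ):ℤ) = (j:ℤ)+1 := by push_cast; ring
      rw [h5, hb, ← e0, c_eval (j+1) b (by omega), c_eval j b (by omega)]
      have e1 : j+1+b-2 = (j+b-2)+1 := by omega
      rw [e1, f_rec]
      rcases Nat.eq_zero_or_pos b with hb0 | hb0
      · subst hb0
        rw [c_zero_gt _ _ _ _ (by push_cast; omega)]
        norm_num
        exact f_zero_neg _ _ (by norm_num)
      · obtain ⟨b', rfl⟩ : ∃ b', b = b'+1 := ⟨b-1, by omega⟩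
        have h3 : (j+1) + 2*b' = m+3 := by omega
        rw [← h3, c_eval (j+1) b' (by omega)]
        have e2 : j+(b'+1)-2 = j+1+b'-2 := by omega
        rw [e2, show ((b'+1:ℕ):ℤ)-1 = (b':ℤ) by push_cast; ring, pow_succ]
        ring
    · rw [c_zero_gt _ _ _ _ (by push_cast; omega), c_zero_gt _ _ _ _ (by push_cast; omega),
        c_zero_gt _ _ _ _ (by push_cast; omega)]
      ring
  · rw [c_zero_par _ _ (by omega), c_zero_par _ _ (by omega), c_zero_par _ _ (by omega)]
    ring

lemma P_rec (m : ℕ) : P (m+5) 2 2 = 2*X*(P (m+4) 2 2) - P (m+3) 2 2 := by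
  have h2 : (2:ℝ[X])*X*(P (m+4) 2 2) = (Polynomial.C (2:ℝ) * (P (m+4) 2 2))*X := by
    rw [show Polynomial.C (2:ℝ) = ((2:ℕ):ℝ[X]) from by push_cast [Polynomial.C_eq_natCast]; rfl]
    push_cast
    ring
  ext j
  rw [Polynomial.coeff_sub, h2]
  cases j with
  | zero =>
    rw [Polynomial.coeff_mul_X_zero, P_coeff, P_coeff]
    have := c_rec0 m
    push_cast [this]
    ring
  | succ j =>
    rw [Polynomial.coeff_mul_X, Polynomial.coeff_C_mul, P_coeff, P_coeff, P_coeff]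
    have := c_recS m j
    push_cast [this]
    ring

lemma P3 : P 3 2 2 = (X^2 - 1) * Polynomial.Chebyshev.U ℝ 1 := by
  have h0 : c 3 (0:ℤ) 2 2 = 0 := by decide
  have h1 : c 3 (1:ℤ) 2 2 = -2 := by decide
  have h2 : c 3 (2:ℤ) 2 2 = 0 := by decide
  have h3 : c 3 (3:ℤ) 2 2 = 2 := by decide
  unfold P
  rw [Finset.sum_range_succ, Finset.sum_range_succ, Finset.sum_range_succ, Finset.sum_range_succ,
    Finset.sum_range_zero]
  norm_num [h0, h1, h2, h3, Polynomial.Chebyshev.U_one, map_ofNat]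
  ring

lemma P4 : P 4 2 2 = (X^2 - 1) * Polynomial.Chebyshev.U ℝ 2 := by
  have h0 : c 4 (0:ℤ) 2 2 = 1 := by decide
  have h1 : c 4 (1:ℤ) 2 2 = 0 := by decide
  have h2 : c 4 (2:ℤ) 2 2 = -5 := by decide
  have h3 : c 4 (3:ℤ) 2 2 = 0 := by decide
  have h4 : c 4 (4:ℤ) 2 2 = 4 := by decide
  unfold P
  rw [Finset.sum_range_succ, Finset.sum_range_succ, Finset.sum_range_succ, Finset.sum_range_succ,
    Finset.sum_range_succ, Finset.sum_range_zero]
  norm_num [h0, h1, h2, h3, h4, Polynomial.Chebyshev.U_two, map_ofNat]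
  ring

lemma P_eqU : ∀ m : ℕ, P (m+3) 2 2 = (X^2 - 1) * Polynomial.Chebyshev.U ℝ ((m:ℤ)+1) := by
  intro m
  induction m using Nat.strong_induction_on with
  | _ m ih =>
    match m with
    | 0 => simpa using P3
    | 1 => simpa using P4
    | (k+2) =>
      have h1 := ih (k+1) (by omega)
      have h2 := ih k (by omega)
      have hr := P_rec k
      rw [show k+2+3 = k+5 by ring, hr, show k+4 = (k+1)+3 by ring, h1, h2]
      have hU := Polynomial.Chebyshev.U_add_two ℝ ((k:ℤ)+1)
      rw [show ((k+2:ℕ):ℤ)+1 = (k:ℤ)+1+2 by push_cast; ring, hU,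
        show ((k+1:ℕ):ℤ)+1 = (k:ℤ)+1+1 by push_cast; ring]
      ring

/-- For n ≥ 3 and x ∈ [-1,1], `P_n(x)² + x² ≤ 1`. -/
theorem statement4 (n : ℕ) (hn : 3 ≤ n) (x : ℝ) (hx : x ∈ Set.Icc (-1 : ℝ) 1) :
    (P n 2 2).eval x ^ 2 + x ^ 2 ≤ 1 := by
  obtain ⟨hx1, hx2⟩ := hx
  obtain ⟨m, rfl⟩ : ∃ m, n = m+3 := ⟨n-3, by omega⟩
  rw [P_eqU m]
  set θ := Real.arccos x with hθ
  have hcos : Real.cos θ = x := Real.cos_arccos hx1 hx2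
  have hsin : Real.sin θ ^ 2 = 1 - x^2 := by rw [Real.sin_sq, hcos]
  have hU := Polynomial.Chebyshev.U_real_cos θ ((m:ℤ)+1)
  rw [hcos] at hU
  set u := (Polynomial.Chebyshev.U ℝ ((m:ℤ)+1)).eval x with hu
  have h1 : (u * Real.sin θ)^2 ≤ 1 := by
    rw [hU]
    exact sin_sq_le_one _
  have h1' : u^2 * (1 - x^2) ≤ 1 := by nlinarith [h1, hsin]
  have hx2' : (0:ℝ) ≤ 1 - x^2 := by nlinarith
  have key : (0:ℝ) ≤ (1-x^2) * (1 - u^2*(1-x^2)) := mul_nonneg hx2' (by linarith)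
  simp only [Polynomial.eval_mul, Polynomial.eval_sub, Polynomial.eval_pow,
    Polynomial.eval_X, Polynomial.eval_one, ← hu]
  nlinarith [key]
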